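/- Let $k > 0$ and let $(M_{(s,t)})$ be a family of nonempty complete metric spaces with diameter bounded by $k$, indexed by $\coprod_{s\in S}T_s$, where $\mu$ is an ultrafilter on $S$ and $\omega_s$ ultrafilters on $T_s$. Define the metric ultraproduct $\int_X A_x \, d\nu$ of such spaces as $\prod_x A_x/\sim$ where $(p_x)\sim(q_x)$ iff for every $\varepsilon > 0$ the set $\{x : d(p_x,q_x) < \varepsilon\} \in \nu$, with metric $d([p],[q]) = \lim_\nu d(p_x,q_x)$. Then the natural map $\int_{\coprod_S T_s} M_{(s,t)} \, d\left(\int_S \iota_s\omega_s \, d\mu\right) \to \int_S \left(\int_{T_s} M_{(s,t)} \, d\omega_s\right) d\mu$, sending the class of $(q_{(s,t)})$ to the class of the tuple of classes, is a well-defined isometric bijection. -/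
import Mathlib


/-- The integral `∫_S ν_s dμ` of a family of ultrafilters against an ultrafilter,
characterized by `B ∈ ∫_S ν_s dμ ↔ {s | B ∈ ν s} ∈ μ`. -/
def UFint {S T : Type*} (μ : Ultrafilter S) (ν : S → Ultrafilter T) : Ultrafilter T :=
  μ.bind ν

lemma mem_UFint {S T : Type*} {μ : Ultrafilter S} {ν : S → Ultrafilter T} {B : Set T} :
    B ∈ UFint μ ν ↔ {s : S | B ∈ ν s} ∈ μ :=
  Filter.mem_bind'

/-- `L` is the ultralimit along `ν` of the family of reals `a`. -/
def IsUlim {X : Type*} (ν : Ultrafilter X) (a : X → ℝ) (L : ℝ) : Prop :=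
  ∀ ε > (0 : ℝ), {x : X | |a x - L| < ε} ∈ ν

/-- The defining relation of the metric ultraproduct `∫_X A_x dν`: two tuples are
identified iff they are arbitrarily close on sets of the ultrafilter. -/
def MetRel {X : Type*} (ν : Ultrafilter X) (M : X → Type*) [∀ x, MetricSpace (M x)]
    (p q : ∀ x, M x) : Prop :=
  ∀ ε > (0 : ℝ), {x : X | dist (p x) (q x) < ε} ∈ ν


lemma isUlim_iff_tendsto {X : Type*} {ν : Ultrafilter X} {a : X → ℝ} {L : ℝ} :
    IsUlim ν a L ↔ Filter.Tendsto a (↑ν) (nhds L) := by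
  simp only [Metric.tendsto_nhds, Real.dist_eq, Filter.eventually_iff, IsUlim,
    Ultrafilter.mem_coe]

lemma exists_isUlim {X : Type*} (ν : Ultrafilter X) (a : X → ℝ) {k : ℝ}
    (h : ∀ x, a x ∈ Set.Icc (0:ℝ) k) : ∃ L, IsUlim ν a L := by
  obtain ⟨L, -, hL⟩ := (isCompact_Icc (a := (0:ℝ)) (b := k)).ultrafilter_le_nhds
    (ν.map a) (by
      rw [Filter.le_principal_iff, Ultrafilter.mem_coe, Ultrafilter.mem_map]
      exact Filter.univ_mem' h)
  refine ⟨L, isUlim_iff_tendsto.2 ?_⟩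
  rwa [Filter.Tendsto, ← Ultrafilter.coe_map]

lemma ulim_sigma_iff {S : Type*} {T : S → Type*} (μ : Ultrafilter S)
    (ω : ∀ s, Ultrafilter (T s)) {k : ℝ} (f : (Σ s, T s) → ℝ)
    (hf : ∀ p, f p ∈ Set.Icc (0:ℝ) k) (L : ℝ) :
    IsUlim (UFint μ (fun s => (ω s).map (Sigma.mk s))) f L ↔
      ∃ dS : S → ℝ, (∀ s, IsUlim (ω s) (fun t => f ⟨s, t⟩) (dS s)) ∧ IsUlim μ dS L := by
  constructor
  · intro h
    choose dS hdS using fun s => exists_isUlim (ω s) (fun t => f ⟨s, t⟩) (fun t => hf _)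
    refine ⟨dS, hdS, ?_⟩
    intro ε hε
    have h2 := h (ε/2) (by linarith)
    rw [mem_UFint] at h2
    refine Filter.mem_of_superset h2 ?_
    intro s hs
    simp only [Set.mem_setOf_eq, Ultrafilter.mem_map] at hs
    have h3 := hdS s (ε/2) (by linarith)
    obtain ⟨t, ht1, ht2⟩ := Filter.nonempty_of_mem (Filter.inter_mem hs h3)
    simp only [Set.mem_preimage, Set.mem_setOf_eq] at ht1 ht2
    have habs : |dS s - L| ≤ |dS s - f ⟨s, t⟩| + |f ⟨s, t⟩ - L| := abs_sub_le _ _ _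
    rw [abs_sub_comm (dS s) (f ⟨s, t⟩)] at habs
    simp only [Set.mem_setOf_eq]
    linarith
  · rintro ⟨dS, hdS, hL⟩ ε hε
    have goal : {p : Σ s, T s | |f p - L| < ε} ∈ UFint μ (fun s => (ω s).map (Sigma.mk s)) := by
      rw [mem_UFint]
      refine Filter.mem_of_superset (hL (ε/2) (by linarith)) ?_
      intro s hs
      simp only [Set.mem_setOf_eq, Ultrafilter.mem_map] at hs ⊢
      refine Filter.mem_of_superset (hdS s (ε/2) (by linarith)) ?_
      intro t ht
      simp only [Set.mem_setOf_eq] at ht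
      simp only [Set.mem_preimage, Set.mem_setOf_eq]
      have h1 : |f ⟨s, t⟩ - L| ≤ |f ⟨s, t⟩ - dS s| + |dS s - L| := abs_sub_le _ _ _
      linarith
    exact goal

lemma metrel_iff {S : Type*} {T : S → Type*} (μ : Ultrafilter S)
    (ω : ∀ s, Ultrafilter (T s)) {k : ℝ}
    (M : (Σ s, T s) → Type*) [∀ p, MetricSpace (M p)]
    (hbd : ∀ p, ∀ x y : M p, dist x y ≤ k) (q r : ∀ p, M p) :
    MetRel (UFint μ (fun s => (ω s).map (Sigma.mk s))) M q r ↔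
      ∀ ε > (0 : ℝ), {s : S | ∃ L : ℝ,
        IsUlim (ω s) (fun t => dist (q ⟨s, t⟩) (r ⟨s, t⟩)) L ∧ L < ε} ∈ μ := by
  constructor
  · intro h ε hε
    have h2 := h (ε/2) (by linarith)
    rw [mem_UFint] at h2
    refine Filter.mem_of_superset h2 ?_
    intro s hs
    simp only [Set.mem_setOf_eq, Ultrafilter.mem_map] at hs
    obtain ⟨Ls, hLs⟩ := exists_isUlim (ω s) (fun t => dist (q ⟨s, t⟩) (r ⟨s, t⟩))
      (fun t => ⟨dist_nonneg, hbd _ _ _⟩)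
    refine ⟨Ls, hLs, ?_⟩
    by_contra hcon
    push_neg at hcon
    have hδ : (0:ℝ) < Ls - ε/2 := by linarith
    obtain ⟨t, ht1, ht2⟩ := Filter.nonempty_of_mem (Filter.inter_mem hs (hLs _ hδ))
    simp only [Set.mem_preimage, Set.mem_setOf_eq] at ht1 ht2
    rw [abs_lt] at ht2
    linarith
  · intro h ε hε
    have goal : {p : Σ s, T s | dist (q p) (r p) < ε} ∈
        UFint μ (fun s => (ω s).map (Sigma.mk s)) := by
      rw [mem_UFint]
      refine Filter.mem_of_superset (h ε hε) ?_
      rintro s ⟨Ls, hLs, hLε⟩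
      simp only [Set.mem_setOf_eq, Ultrafilter.mem_map]
      refine Filter.mem_of_superset (hLs (ε - Ls) (by linarith)) ?_
      intro t ht
      simp only [Set.mem_setOf_eq] at ht
      simp only [Set.mem_preimage, Set.mem_setOf_eq]
      rw [abs_lt] at ht
      linarith
    exact goal

/-- for a family of nonempty complete metric spaces `M_{(s,t)}` of diameter
bounded by `k`, indexed by `∐_{s∈S} T_s`, with `μ` an ultrafilter on `S` and `ω_s`
ultrafilters on `T_s`, the natural map
`∫_{∐_S T_s} M_{(s,t)} d(∫_S ι_s ω_s dμ) → ∫_S (∫_{T_s} M_{(s,t)} dω_s) dμ`,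
sending the class of `(q_{(s,t)})` to the class of the tuple of classes, is a
well-defined isometric bijection.  The iterated ultraproduct on the right is presented
as the quotient of `∏_p M_p` by the relation "the per-`s` ultralimit distances are
`< ε` on a `μ`-large set of `s`, for every `ε > 0`", and the metric on either side is
given by ultralimits of distances (`IsUlim`): the isometry condition says that `L` is
the distance of `[q],[r]` on the left iff it is their distance on the right. -/
theorem metric_ultraproduct_pseudoalgebra {S : Type*} {T : S → Type*}
    (μ : Ultrafilter S) (ω : ∀ s, Ultrafilter (T s)) (k : ℝ) (hk : 0 < k)
    (M : (Σ s, T s) → Type*) [∀ p, MetricSpace (M p)] [∀ p, CompleteSpace (M p)]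
    (hne : ∀ p, Nonempty (M p)) (hbd : ∀ p, ∀ x y : M p, dist x y ≤ k) :
    ∃ a : Quot (MetRel (UFint μ (fun s => (ω s).map (Sigma.mk s))) M) →
        Quot (fun q r : ∀ p, M p =>
          ∀ ε > (0 : ℝ), {s : S | ∃ L : ℝ,
            IsUlim (ω s) (fun t => dist (q ⟨s, t⟩) (r ⟨s, t⟩)) L ∧ L < ε} ∈ μ),
      (∀ q : ∀ p, M p, a (Quot.mk _ q) = Quot.mk _ q) ∧
      Function.Bijective a ∧
      (∀ (q r : ∀ p, M p) (L : ℝ),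
        IsUlim (UFint μ (fun s => (ω s).map (Sigma.mk s)))
          (fun p => dist (q p) (r p)) L ↔
        ∃ dS : S → ℝ,
          (∀ s, IsUlim (ω s) (fun t => dist (q ⟨s, t⟩) (r ⟨s, t⟩)) (dS s)) ∧
          IsUlim μ dS L) := by
  have hrel := metrel_iff μ ω M hbd
  refine ⟨Quot.map id (fun q r h => (hrel q r).1 h), fun q => rfl, ?_, ?_⟩
  · have hinv : Function.LeftInverse (Quot.map id (fun q r h => (hrel q r).2 h))
        (Quot.map id (fun q r h => (hrel q r).1 h)) := by
      intro x
      induction x using Quot.ind with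
      | _ q => rfl
    have hinv2 : Function.RightInverse (Quot.map id (fun q r h => (hrel q r).2 h))
        (Quot.map id (fun q r h => (hrel q r).1 h)) := by
      intro x
      induction x using Quot.ind with
      | _ q => rfl
    exact ⟨hinv.injective, hinv2.surjective⟩
  · intro q r L
    exact ulim_sigma_iff μ ω (fun p => dist (q p) (r p))
      (fun p => ⟨dist_nonneg, hbd _ _ _⟩) L
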